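/- Let d be an ultrametric on a finite set V with n = |V| ≥ 2, D its distance matrix, m = min_{x≠y} d(x,y) and M = max_{x≠y} d(x,y). Then the smallest eigenvalue λ_n(D) of D satisfies λ_n(D) ≥ n(m−M)/2 − m if n is even, and λ_n(D) ≥ (n·m − √(m² + (n²−1)M²))/2 − m if n is odd. -/

import Mathlib

open Finset

lemma combine_aux (c c' SA SB WA WB QA QB : ℝ) (hc'pos : 0 ≤ c') (hc'c : c' ≤ c)
    (hWA0 : 0 ≤ WA) (hWB0 : 0 ≤ WB) (hSWA : |SA| ≤ WA) (hSWB : |SB| ≤ WB)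
    (ihA : c * (SA ^ 2 - WA ^ 2) / 2 ≤ QA) (ihB : c * (SB ^ 2 - WB ^ 2) / 2 ≤ QB) :
    c * ((SA + SB) ^ 2 - (WA + WB) ^ 2) / 2 ≤ QA + c' * (SA * SB) + (c' * (SA * SB) + QB) := by
  have hc : 0 ≤ c := hc'pos.trans hc'c
  have hprod : |SA * SB| ≤ WA * WB := by
    rw [abs_mul]
    exact mul_le_mul hSWA hSWB (abs_nonneg _) hWA0
  have key : c * (SA * SB - WA * WB) ≤ 2 * (c' * (SA * SB)) := by
    rcases le_or_gt 0 (SA * SB) with h | h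
    · have h1' : SA * SB ≤ WA * WB := (le_abs_self _).trans hprod
      nlinarith [mul_nonneg hc'pos h]
    · have h1' : -(WA * WB) ≤ SA * SB := by
        have := neg_abs_le (SA * SB)
        nlinarith
      nlinarith [mul_nonneg hc (neg_nonneg.2 h.le)]
  nlinarith [ihA, ihB, key]

lemma ultra_quadform_lb {V : Type*} [DecidableEq V] (c : ℝ) (hc : 0 ≤ c)
    (e : V → V → ℝ) (hsym : ∀ x y, e x y = e y x) (hdiag : ∀ x, e x x = 0)
    (v : V → ℝ) (s : Finset V)
    (h0 : ∀ x ∈ s, ∀ y ∈ s, 0 ≤ e x y) (h1 : ∀ x ∈ s, ∀ y ∈ s, e x y ≤ c)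
    (h2 : ∀ x ∈ s, ∀ y ∈ s, ∀ z ∈ s, e x z ≤ max (e x y) (e y z)) :
    c * ((∑ x ∈ s, v x) ^ 2 - (∑ x ∈ s, |v x|) ^ 2) / 2 ≤
      ∑ x ∈ s, ∑ y ∈ s, e x y * v x * v y := by
  have habs : ∀ t : Finset V, (∑ x ∈ t, v x) ^ 2 ≤ (∑ x ∈ t, |v x|) ^ 2 := by
    intro t
    have h := Finset.abs_sum_le_sum_abs v t
    have h' := abs_nonneg (∑ x ∈ t, v x)
    nlinarith [neg_abs_le (∑ x ∈ t, v x), le_abs_self (∑ x ∈ t, v x)]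
  induction s using Finset.strongInduction with
  | _ s ih =>
    by_cases hall : ∀ x ∈ s, ∀ y ∈ s, e x y = 0
    · have hz : ∑ x ∈ s, ∑ y ∈ s, e x y * v x * v y = 0 := by
        apply Finset.sum_eq_zero
        intro x hx
        apply Finset.sum_eq_zero
        intro y hy
        rw [hall x hx y hy]; ring
      rw [hz]
      nlinarith [habs s]
    · push_neg at hall
      obtain ⟨x1, hx1, y1, hy1, hne⟩ := hall
      obtain ⟨⟨x0, y0⟩, hmem0, hmax⟩ :=
        Finset.exists_max_image (s ×ˢ s) (fun p => e p.1 p.2) ⟨(x1, y1), mem_product.2 ⟨hx1, hy1⟩⟩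
      obtain ⟨hx0, hy0⟩ := mem_product.1 hmem0
      set c' := e x0 y0 with hc'def
      have hc'max : ∀ x ∈ s, ∀ y ∈ s, e x y ≤ c' := fun x hx y hy =>
        hmax (x, y) (mem_product.2 ⟨hx, hy⟩)
      have hc'pos : 0 < c' := by
        have := h0 x1 hx1 y1 hy1
        have h2' := hc'max x1 hx1 y1 hy1
        rcases this.lt_or_eq with h | h
        · exact lt_of_lt_of_le h h2'
        · exact absurd h.symm hne
      have hc'c : c' ≤ c := h1 x0 hx0 y0 hy0
      set A := s.filter (fun x => e x x0 < c') with hAdef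
      set B := s.filter (fun x => ¬ e x x0 < c') with hBdef
      have hAs : A ⊆ s := filter_subset _ _
      have hBs : B ⊆ s := filter_subset _ _
      have hU : A ∪ B = s := filter_union_filter_not_eq _ s
      have hdisj : Disjoint A B := disjoint_filter_filter_not s s _
      have hx0A : x0 ∈ A := mem_filter.2 ⟨hx0, by rw [hdiag]; exact hc'pos⟩
      have hy0B : y0 ∈ B := mem_filter.2 ⟨hy0, by rw [hsym]; exact lt_irrefl _⟩
      have hAss : A ⊂ s := by
        refine Finset.ssubset_iff_of_subset hAs |>.2 ⟨y0, hy0, ?_⟩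
        intro hy0A
        exact (Finset.disjoint_left.1 hdisj hy0A) hy0B
      have hBss : B ⊂ s := by
        refine Finset.ssubset_iff_of_subset hBs |>.2 ⟨x0, hx0, ?_⟩
        intro hx0B
        exact (Finset.disjoint_left.1 hdisj hx0A) hx0B
      have cross : ∀ x ∈ A, ∀ y ∈ B, e x y = c' := by
        intro x hx y hy
        have hxs := hAs hx
        have hys := hBs hy
        have hxx0 : e x x0 < c' := (mem_filter.1 hx).2
        have hyx0 : e y x0 = c' :=
          le_antisymm (hc'max y hys x0 hx0) (not_lt.1 (mem_filter.1 hy).2)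
        refine le_antisymm (hc'max x hxs y hys) ?_
        have h := h2 y hys x hxs x0 hx0
        rw [hyx0] at h
        rcases le_max_iff.1 h with h' | h'
        · rw [hsym]; exact h'
        · exact absurd h' (not_le.2 hxx0)
      -- abbreviations
      have ihA := ih A hAss (fun x hx y hy => h0 x (hAs hx) y (hAs hy))
        (fun x hx y hy => h1 x (hAs hx) y (hAs hy))
        (fun x hx y hy z hz => h2 x (hAs hx) y (hAs hy) z (hAs hz))
      have ihB := ih B hBss (fun x hx y hy => h0 x (hBs hx) y (hBs hy))
        (fun x hx y hy => h1 x (hBs hx) y (hBs hy))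
        (fun x hx y hy z hz => h2 x (hBs hx) y (hBs hy) z (hBs hz))
      have crossAB : ∑ x ∈ A, ∑ y ∈ B, e x y * v x * v y = c' * ((∑ x ∈ A, v x) * (∑ x ∈ B, v x)) := by
        rw [Finset.sum_mul_sum, Finset.mul_sum]
        apply Finset.sum_congr rfl
        intro x hx
        rw [Finset.mul_sum]
        apply Finset.sum_congr rfl
        intro y hy
        rw [cross x hx y hy]; ring
      have crossBA : ∑ x ∈ B, ∑ y ∈ A, e x y * v x * v y = c' * ((∑ x ∈ A, v x) * (∑ x ∈ B, v x)) := by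
        rw [mul_comm (∑ x ∈ A, v x) (∑ x ∈ B, v x), Finset.sum_mul_sum, Finset.mul_sum]
        apply Finset.sum_congr rfl
        intro x hx
        rw [Finset.mul_sum]
        apply Finset.sum_congr rfl
        intro y hy
        have : e x y = c' := by rw [hsym]; exact cross y hy x hx
        rw [this]; ring
      have hinner : ∀ x, (∑ y ∈ s, e x y * v x * v y) =
          (∑ y ∈ A, e x y * v x * v y) + (∑ y ∈ B, e x y * v x * v y) := by
        intro x
        have h := Finset.sum_union (f := fun y => e x y * v x * v y) hdisj
        rwa [hU] at h
      have houter := Finset.sum_union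
        (f := fun x => ∑ y ∈ s, e x y * v x * v y) hdisj
      rw [hU] at houter
      have hsplit : ∑ x ∈ s, ∑ y ∈ s, e x y * v x * v y =
          (∑ x ∈ A, ∑ y ∈ A, e x y * v x * v y) + c' * ((∑ x ∈ A, v x) * (∑ x ∈ B, v x)) + (c' * ((∑ x ∈ A, v x) * (∑ x ∈ B, v x)) +
            (∑ x ∈ B, ∑ y ∈ B, e x y * v x * v y)) := by
        rw [houter]
        rw [Finset.sum_congr rfl (fun x _ => hinner x),
          Finset.sum_congr rfl (fun x _ => hinner x),
          Finset.sum_add_distrib, Finset.sum_add_distrib, crossAB, crossBA]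
      have hSsum : ∑ x ∈ s, v x = (∑ x ∈ A, v x) + (∑ x ∈ B, v x) := by
        have h := Finset.sum_union (f := v) hdisj
        rwa [hU] at h
      have hWsum : ∑ x ∈ s, |v x| = (∑ x ∈ A, |v x|) + (∑ x ∈ B, |v x|) := by
        have h := Finset.sum_union (f := fun x => |v x|) hdisj
        rwa [hU] at h
      rw [hsplit, hSsum, hWsum]
      exact combine_aux c c' _ _ _ _ _ _ hc'pos.le hc'c
        (Finset.sum_nonneg fun x _ => abs_nonneg _)
        (Finset.sum_nonneg fun x _ => abs_nonneg _)
        (Finset.abs_sum_le_sum_abs v A) (Finset.abs_sum_le_sum_abs v B) ihA ihB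

lemma crux_core (k l m M c N Np Nq p q : ℝ) (hk0 : 0 < k) (hl0 : 0 < l)
    (hm0 : 0 ≤ m) (hM0 : 0 ≤ M) (hc0 : c ≤ 0)
    (hab : k * l * M ^ 2 ≤ (k * m - c) * (l * m - c))
    (hp0 : 0 ≤ p) (hq0 : 0 ≤ q) (hNpq : Np + Nq ≤ N)
    (hp2 : p ^ 2 ≤ k * Np) (hq2 : q ^ 2 ≤ l * Nq) :
    c * N ≤ m * (p ^ 2 + q ^ 2) - 2 * M * p * q := by
  have ha' : 0 ≤ k * m - c := by nlinarith [mul_nonneg hk0.le hm0]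
  have hb' : 0 ≤ l * m - c := by nlinarith [mul_nonneg hl0.le hm0]
  have hX0 : 0 ≤ l * (k * m - c) * p ^ 2 := mul_nonneg (mul_nonneg hl0.le ha') (sq_nonneg p)
  have hY0 : 0 ≤ k * (l * m - c) * q ^ 2 := mul_nonneg (mul_nonneg hk0.le hb') (sq_nonneg q)
  have hT0 : 0 ≤ k * l * M * (p * q) :=
    mul_nonneg (mul_nonneg (mul_nonneg hk0.le hl0.le) hM0) (mul_nonneg hp0 hq0)
  have hXY : (k * l * M * (p * q)) ^ 2 ≤ (l * (k * m - c) * p ^ 2) * (k * (l * m - c) * q ^ 2) := by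
    have h3 : 0 ≤ k * l * (p * q) ^ 2 :=
      mul_nonneg (mul_nonneg hk0.le hl0.le) (sq_nonneg _)
    nlinarith [mul_nonneg h3 (sub_nonneg.2 hab)]
  have hAMGM : 2 * (k * l * M * (p * q)) ≤ l * (k * m - c) * p ^ 2 + k * (l * m - c) * q ^ 2 := by
    nlinarith [sq_nonneg (l * (k * m - c) * p ^ 2 - k * (l * m - c) * q ^ 2), hXY, hX0, hY0, hT0]
  have h1 : l * p ^ 2 + k * q ^ 2 ≤ k * l * N := by
    nlinarith [mul_le_mul_of_nonneg_left hp2 hl0.le,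
      mul_le_mul_of_nonneg_left hq2 hk0.le,
      mul_le_mul_of_nonneg_left hNpq (mul_nonneg hk0.le hl0.le)]
  have h2 : k * l * (c * N) ≤ c * (l * p ^ 2 + k * q ^ 2) := by
    nlinarith [mul_le_mul_of_nonpos_left h1 hc0]
  have h3 : c * (l * p ^ 2 + k * q ^ 2) ≤ k * l * (m * (p ^ 2 + q ^ 2) - 2 * M * p * q) := by
    nlinarith [hAMGM]
  have hklpos : 0 < k * l := mul_pos hk0 hl0
  exact le_of_mul_le_mul_left (h2.trans h3) hklpos

lemma crux_ineq (n k : ℕ) (hk1 : 1 ≤ k) (hkn : k < n) (m M K N p q Np Nq : ℝ)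
    (hm0 : 0 ≤ m) (hmM : m ≤ M) (hK0 : 0 ≤ K)
    (hkl : (k : ℝ) * ((n : ℝ) - k) ≤ K)
    (hp0 : 0 ≤ p) (hq0 : 0 ≤ q) (hNpq : Np + Nq ≤ N)
    (hp2 : p ^ 2 ≤ (k : ℝ) * Np) (hq2 : q ^ 2 ≤ ((n : ℝ) - k) * Nq) :
    ((n : ℝ) * m - Real.sqrt (m ^ 2 * n ^ 2 + 4 * K * (M ^ 2 - m ^ 2))) / 2 * N ≤
      m * (p ^ 2 + q ^ 2) - 2 * M * p * q := by
  have hM0 : 0 ≤ M := hm0.trans hmM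
  have hM2 : m ^ 2 ≤ M ^ 2 := by nlinarith
  have hk0 : (0 : ℝ) < (k : ℝ) := by exact_mod_cast hk1
  have hl0 : (0 : ℝ) < (n : ℝ) - k := by
    have : (k : ℝ) + 1 ≤ (n : ℝ) := by exact_mod_cast hkn
    linarith
  have h4K : 0 ≤ 4 * K * (M ^ 2 - m ^ 2) := by
    have := mul_nonneg hK0 (sub_nonneg.2 hM2)
    linarith
  have harg : 0 ≤ m ^ 2 * n ^ 2 + 4 * K * (M ^ 2 - m ^ 2) := by positivity
  have hR0 : 0 ≤ Real.sqrt (m ^ 2 * n ^ 2 + 4 * K * (M ^ 2 - m ^ 2)) := Real.sqrt_nonneg _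
  have hR2 : (Real.sqrt (m ^ 2 * n ^ 2 + 4 * K * (M ^ 2 - m ^ 2))) ^ 2 =
      m ^ 2 * n ^ 2 + 4 * K * (M ^ 2 - m ^ 2) := Real.sq_sqrt harg
  have hnm0 : 0 ≤ (n : ℝ) * m := mul_nonneg (Nat.cast_nonneg n) hm0
  -- abstract the sqrt
  obtain ⟨R, hRdef⟩ : ∃ R : ℝ, R = Real.sqrt (m ^ 2 * n ^ 2 + 4 * K * (M ^ 2 - m ^ 2)) := ⟨_, rfl⟩
  rw [← hRdef] at hR0 hR2 ⊢
  have hc0 : ((n : ℝ) * m - R) / 2 ≤ 0 := by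
    have : (n : ℝ) * m ≤ R := by nlinarith [hR2, hR0, hnm0, h4K]
    linarith
  have hcc : (((n : ℝ) * m - R) / 2) ^ 2 - (((n : ℝ) * m - R) / 2) * ((n : ℝ) * m)
      = K * (M ^ 2 - m ^ 2) := by linear_combination hR2 / 4
  have hab : (k : ℝ) * ((n : ℝ) - k) * M ^ 2 ≤
      ((k : ℝ) * m - ((n : ℝ) * m - R) / 2) * (((n : ℝ) - k) * m - ((n : ℝ) * m - R) / 2) := by
    have h2 : 0 ≤ (K - (k : ℝ) * ((n : ℝ) - k)) * (M ^ 2 - m ^ 2) :=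
      mul_nonneg (by linarith) (by linarith)
    nlinarith [hcc]
  have := crux_core (k : ℝ) ((n : ℝ) - k) m M (((n : ℝ) * m - R) / 2) N Np Nq p q
    hk0 hl0 hm0 hM0 hc0 hab hp0 hq0 hNpq hp2 hq2
  calc ((n : ℝ) * m - R) / 2 * N = ((n : ℝ) * m - R) / 2 * N := rfl
    _ ≤ _ := this


lemma keyK_aux (n kP kQ : ℕ) (mu m M N p q Np Nq Kr : ℝ)
    (hm0 : 0 ≤ m) (hmM : m ≤ M) (hN : 0 < N)
    (hp0 : 0 ≤ p) (hq0 : 0 ≤ q) (hNq0 : 0 ≤ Nq) (hNpq : Np + Nq ≤ N)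
    (hp2 : p ^ 2 ≤ (kP : ℝ) * Np) (hq2 : q ^ 2 ≤ (kQ : ℝ) * Nq)
    (hpk : p ≠ 0 → 1 ≤ kP) (hqk : q ≠ 0 → 1 ≤ kQ)
    (hcard : kP + kQ ≤ n)
    (hmain : m * (p ^ 2 + q ^ 2) - 2 * M * p * q - m * N ≤ mu * N)
    (hK0 : 0 ≤ Kr)
    (hKk : ∀ k : ℕ, 1 ≤ k → k < n → (k : ℝ) * ((n : ℝ) - k) ≤ Kr) :
    ((n : ℝ) * m - Real.sqrt (m ^ 2 * (n : ℝ) ^ 2 + 4 * Kr * (M ^ 2 - m ^ 2))) / 2 - m ≤ mu := by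
  have hM2 : m ^ 2 ≤ M ^ 2 := by nlinarith
  have h4K : 0 ≤ 4 * Kr * (M ^ 2 - m ^ 2) := by
    have := mul_nonneg hK0 (sub_nonneg.2 hM2)
    linarith
  have harg : 0 ≤ m ^ 2 * (n : ℝ) ^ 2 + 4 * Kr * (M ^ 2 - m ^ 2) := by positivity
  have hR0 := Real.sqrt_nonneg (m ^ 2 * (n : ℝ) ^ 2 + 4 * Kr * (M ^ 2 - m ^ 2))
  have hR2 := Real.sq_sqrt harg
  have hnm0 : 0 ≤ (n : ℝ) * m := mul_nonneg (Nat.cast_nonneg _) hm0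
  have hc0 : ((n : ℝ) * m - Real.sqrt (m ^ 2 * (n : ℝ) ^ 2 + 4 * Kr * (M ^ 2 - m ^ 2))) / 2 ≤ 0 := by
    have : (n : ℝ) * m ≤ Real.sqrt (m ^ 2 * (n : ℝ) ^ 2 + 4 * Kr * (M ^ 2 - m ^ 2)) := by
      nlinarith [hR2, hR0, hnm0, h4K]
    linarith
  have hGb : ((n : ℝ) * m - Real.sqrt (m ^ 2 * (n : ℝ) ^ 2 + 4 * Kr * (M ^ 2 - m ^ 2))) / 2 * N
      ≤ m * (p ^ 2 + q ^ 2) - 2 * M * p * q := by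
    by_cases hpq : p = 0 ∨ q = 0
    · rcases hpq with h | h <;> rw [h] <;>
        nlinarith [mul_nonneg hm0 (sq_nonneg p), mul_nonneg hm0 (sq_nonneg q),
          mul_nonpos_of_nonpos_of_nonneg hc0 hN.le]
    · push_neg at hpq
      have hk1 : 1 ≤ kP := hpk hpq.1
      have hl1 : 1 ≤ kQ := hqk hpq.2
      have hkn : kP < n := by omega
      have hq2' : q ^ 2 ≤ ((n : ℝ) - kP) * Nq := by
        have hcast : (kQ : ℝ) ≤ (n : ℝ) - kP := by
          have : (kP : ℝ) + (kQ : ℝ) ≤ (n : ℝ) := by exact_mod_cast hcard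
          linarith
        calc q ^ 2 ≤ (kQ : ℝ) * Nq := hq2
          _ ≤ _ := mul_le_mul_of_nonneg_right hcast hNq0
      exact crux_ineq n kP hk1 hkn m M Kr N p q Np Nq hm0 hmM hK0 (hKk _ hk1 hkn)
        hp0 hq0 hNpq hp2 hq2'
  have h6 : (((n : ℝ) * m - Real.sqrt (m ^ 2 * (n : ℝ) ^ 2 + 4 * Kr * (M ^ 2 - m ^ 2))) / 2 - m)
      * N ≤ mu * N := by linarith [hGb, hmain]
  exact le_of_mul_le_mul_right h6 hN


set_option maxHeartbeats 1000000 in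
theorem stmt_14 {V : Type*} [Fintype V] [DecidableEq V] (hcard : 1 < Fintype.card V)
    (d : V → V → ℝ) (hsymm : ∀ x y : V, d x y = d y x)
    (hzero : ∀ x y : V, d x y = 0 ↔ x = y) (hnn : ∀ x y : V, 0 ≤ d x y)
    (hstrong : ∀ x y z : V, d x z ≤ max (d x y) (d y z))
    (m M : ℝ)
    (hm : IsLeast {t | ∃ x y : V, x ≠ y ∧ d x y = t} m)
    (hM : IsGreatest {t | ∃ x y : V, x ≠ y ∧ d x y = t} M) :
    ∀ (μ : ℝ) (v : V → ℝ), v ≠ 0 → (Matrix.of d).mulVec v = μ • v →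
      (Even (Fintype.card V) → (Fintype.card V : ℝ) * (m - M) / 2 - m ≤ μ) ∧
      (Odd (Fintype.card V) →
        ((Fintype.card V : ℝ) * m -
          Real.sqrt (m ^ 2 + ((Fintype.card V : ℝ) ^ 2 - 1) * M ^ 2)) / 2 - m ≤ μ) := by
  intro μ v hv0 heig
  have hd_diag : ∀ x : V, d x x = 0 := fun x => (hzero x x).2 rfl
  have hd_ge : ∀ x y : V, x ≠ y → m ≤ d x y := fun x y hxy => hm.2 ⟨x, y, hxy, rfl⟩
  have hd_le : ∀ x y : V, x ≠ y → d x y ≤ M := fun x y hxy => hM.2 ⟨x, y, hxy, rfl⟩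
  have hm0 : 0 ≤ m := by
    obtain ⟨x, y, hxy, hd⟩ := hm.1
    rw [← hd]; exact hnn x y
  have hmM : m ≤ M := hm.2 hM.1
  have hM0 : 0 ≤ M := hm0.trans hmM
  -- positivity of the norm
  have hN : 0 < ∑ x : V, v x ^ 2 := by
    obtain ⟨x, hx⟩ := Function.ne_iff.1 hv0
    have hx' : v x ≠ 0 := by simpa using hx
    have h1 : 0 < v x ^ 2 := by positivity
    exact lt_of_lt_of_le h1 (Finset.single_le_sum (fun i _ => sq_nonneg (v i)) (Finset.mem_univ x))
  -- eigen equation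
  have hxeq : ∀ x : V, (∑ y : V, d x y * v y) = μ * v x := by
    intro x
    have h := congrFun heig x
    simpa [Matrix.mulVec, dotProduct, Matrix.of_apply] using h
  have hquad : ∑ x : V, ∑ y : V, d x y * v x * v y = μ * ∑ x : V, v x ^ 2 := by
    calc ∑ x : V, ∑ y : V, d x y * v x * v y = ∑ x : V, v x * (∑ y : V, d x y * v y) := by
          refine Finset.sum_congr rfl fun x _ => ?_
          rw [Finset.mul_sum]
          exact Finset.sum_congr rfl fun y _ => by ring
      _ = ∑ x : V, v x * (μ * v x) := Finset.sum_congr rfl fun x _ => by rw [hxeq x]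
      _ = μ * ∑ x : V, v x ^ 2 := by
          rw [Finset.mul_sum]
          exact Finset.sum_congr rfl fun x _ => by ring
  -- shifted matrix e
  have esym : ∀ x y : V, (if x = y then (0:ℝ) else d x y - m) = (if y = x then (0:ℝ) else d y x - m) := by
    intro x y
    by_cases h : x = y
    · simp [h]
    · rw [if_neg h, if_neg (Ne.symm h), hsymm x y]
  have ediag : ∀ x : V, (if x = x then (0:ℝ) else d x x - m) = 0 := fun x => if_pos rfl
  have h0' : ∀ x ∈ Finset.univ, ∀ y ∈ (Finset.univ : Finset V),
      0 ≤ (if x = y then (0:ℝ) else d x y - m) := by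
    intro x _ y _
    by_cases h : x = y
    · simp [h]
    · rw [if_neg h]; linarith [hd_ge x y h]
  have h1' : ∀ x ∈ Finset.univ, ∀ y ∈ (Finset.univ : Finset V),
      (if x = y then (0:ℝ) else d x y - m) ≤ M - m := by
    intro x _ y _
    by_cases h : x = y
    · rw [if_pos h]; linarith
    · rw [if_neg h]; linarith [hd_le x y h]
  have h2' : ∀ x ∈ Finset.univ, ∀ y ∈ Finset.univ, ∀ z ∈ (Finset.univ : Finset V),
      (if x = z then (0:ℝ) else d x z - m) ≤
        max (if x = y then (0:ℝ) else d x y - m) (if y = z then (0:ℝ) else d y z - m) := by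
    intro x _ y _ z _
    by_cases hxz : x = z
    · subst hxz
      rw [if_pos rfl]
      by_cases hxy : x = y
      · subst hxy; simp
      · apply le_max_of_le_left
        rw [if_neg hxy]
        linarith [hd_ge x y hxy]
    · by_cases hxy : x = y
      · subst hxy
        exact le_max_of_le_right le_rfl
      · by_cases hyz : y = z
        · subst hyz
          exact le_max_of_le_left le_rfl
        · rw [if_neg hxz, if_neg hxy, if_neg hyz]
          have h := hstrong x y z
          rcases max_cases (d x y) (d y z) with ⟨heq, _⟩ | ⟨heq, _⟩
          · rw [heq] at h
            apply le_max_of_le_left; linarith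
          · rw [heq] at h
            apply le_max_of_le_right; linarith
  have hE := ultra_quadform_lb (M - m) (by linarith)
    (fun x y => if x = y then (0:ℝ) else d x y - m) esym ediag v Finset.univ h0' h1' h2'
  -- decomposition
  have hterm : ∀ x y : V, d x y * v x * v y =
      (if x = y then (0:ℝ) else d x y - m) * v x * v y + m * (v x * v y)
        - (if x = y then m * (v x * v y) else 0) := by
    intro x y
    by_cases h : x = y
    · subst h; rw [hd_diag x]; simp
    · rw [if_neg h, if_neg h]; ring
  have hdecomp : ∑ x : V, ∑ y : V, d x y * v x * v y
      = m * ((∑ x : V, v x) * (∑ x : V, v x)) - m * (∑ x : V, v x ^ 2)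
        + ∑ x : V, ∑ y : V, (if x = y then (0:ℝ) else d x y - m) * v x * v y := by
    have h1 : ∀ x : V, (∑ y : V, d x y * v x * v y)
        = (∑ y : V, (if x = y then (0:ℝ) else d x y - m) * v x * v y)
          + (∑ y : V, m * (v x * v y)) - (∑ y : V, if x = y then m * (v x * v y) else 0) := by
      intro x
      rw [← Finset.sum_add_distrib, ← Finset.sum_sub_distrib]
      exact Finset.sum_congr rfl fun y _ => hterm x y
    have h2 : ∀ x : V, (∑ y : V, if x = y then m * (v x * v y) else 0) = m * (v x * v x) := by
      intro x; simp
    have h3 : ∀ x : V, (∑ y : V, m * (v x * v y)) = m * (v x * ∑ y : V, v y) := by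
      intro x
      rw [Finset.mul_sum, Finset.mul_sum]
    calc ∑ x : V, ∑ y : V, d x y * v x * v y
        = ∑ x : V, ((∑ y : V, (if x = y then (0:ℝ) else d x y - m) * v x * v y)
            + m * (v x * ∑ y : V, v y) - m * (v x * v x)) := by
          refine Finset.sum_congr rfl fun x _ => ?_
          rw [h1 x, h2 x, h3 x]
      _ = (∑ x : V, ∑ y : V, (if x = y then (0:ℝ) else d x y - m) * v x * v y)
            + (∑ x : V, m * (v x * ∑ y : V, v y)) - ∑ x : V, m * (v x * v x) := by
          rw [← Finset.sum_add_distrib, ← Finset.sum_sub_distrib]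
      _ = m * ((∑ x : V, v x) * (∑ x : V, v x)) - m * (∑ x : V, v x ^ 2)
            + ∑ x : V, ∑ y : V, (if x = y then (0:ℝ) else d x y - m) * v x * v y := by
          have e1 : ∑ x : V, m * (v x * ∑ y : V, v y)
              = m * ((∑ x : V, v x) * (∑ x : V, v x)) := by
            calc ∑ x : V, m * (v x * ∑ y : V, v y)
                = ∑ x : V, v x * (m * ∑ y : V, v y) :=
                  Finset.sum_congr rfl fun x _ => by ring
              _ = (∑ x : V, v x) * (m * ∑ y : V, v y) := (Finset.sum_mul ..).symm
              _ = m * ((∑ x : V, v x) * (∑ x : V, v x)) := by ring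
          have e2 : ∑ x : V, m * (v x * v x) = m * ∑ x : V, v x ^ 2 := by
            rw [Finset.mul_sum]
            exact Finset.sum_congr rfl fun x _ => by ring
          rw [e1, e2]; ring
  -- positive and negative parts
  have hPsplit : ∀ x : V, v x = (if 0 < v x then v x else 0) + (if v x < 0 then v x else 0) := by
    intro x
    by_cases h1 : 0 < v x
    · rw [if_pos h1, if_neg (lt_asymm h1)]; ring
    · by_cases h2 : v x < 0
      · rw [if_neg h1, if_pos h2]; ring
      · have h3 : v x = 0 := le_antisymm (not_lt.1 h1) (not_lt.1 h2)
        rw [if_neg h1, if_neg h2, h3]; ring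
  have hWsplit : ∀ x : V, |v x| = (if 0 < v x then v x else 0) + (if v x < 0 then -v x else 0) := by
    intro x
    by_cases h1 : 0 < v x
    · rw [if_pos h1, if_neg (lt_asymm h1), abs_of_pos h1]; ring
    · by_cases h2 : v x < 0
      · rw [if_neg h1, if_pos h2, abs_of_neg h2]; ring
      · have h3 : v x = 0 := le_antisymm (not_lt.1 h1) (not_lt.1 h2)
        rw [if_neg h1, if_neg h2, h3]; simp
  have hS : (∑ x : V, v x)
      = (∑ x ∈ Finset.univ.filter (fun x => 0 < v x), v x)
        - (-(∑ x ∈ Finset.univ.filter (fun x => v x < 0), v x)) := by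
    calc (∑ x : V, v x)
        = ∑ x : V, ((if 0 < v x then v x else 0) + (if v x < 0 then v x else 0)) :=
          Finset.sum_congr rfl fun x _ => hPsplit x
      _ = (∑ x : V, if 0 < v x then v x else 0) + (∑ x : V, if v x < 0 then v x else 0) :=
          Finset.sum_add_distrib
      _ = _ := by rw [Finset.sum_filter, Finset.sum_filter]; ring
  have hW : (∑ x : V, |v x|)
      = (∑ x ∈ Finset.univ.filter (fun x => 0 < v x), v x)
        + (-(∑ x ∈ Finset.univ.filter (fun x => v x < 0), v x)) := by
    calc (∑ x : V, |v x|)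
        = ∑ x : V, ((if 0 < v x then v x else 0) + (if v x < 0 then -v x else 0)) :=
          Finset.sum_congr rfl fun x _ => hWsplit x
      _ = (∑ x : V, if 0 < v x then v x else 0) + (∑ x : V, if v x < 0 then -v x else 0) :=
          Finset.sum_add_distrib
      _ = _ := by
          rw [Finset.sum_filter, Finset.sum_filter, ← Finset.sum_neg_distrib]
          congr 1
          refine Finset.sum_congr rfl fun x _ => ?_
          by_cases h : v x < 0 <;> simp [h]
  have hp0 : 0 ≤ ∑ x ∈ Finset.univ.filter (fun x => 0 < v x), v x :=
    Finset.sum_nonneg fun x hx => ((Finset.mem_filter.1 hx).2).le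
  have hq0 : 0 ≤ -(∑ x ∈ Finset.univ.filter (fun x => v x < 0), v x) := by
    rw [neg_nonneg]
    exact Finset.sum_nonpos fun x hx => ((Finset.mem_filter.1 hx).2).le
  have hdisjPQ : Disjoint (Finset.univ.filter (fun x => 0 < v x))
      (Finset.univ.filter (fun x => v x < 0)) := by
    rw [Finset.disjoint_left]
    intro a ha hb
    exact lt_asymm (Finset.mem_filter.1 ha).2 (Finset.mem_filter.1 hb).2
  have hNpq : (∑ x ∈ Finset.univ.filter (fun x => 0 < v x), v x ^ 2)
      + (∑ x ∈ Finset.univ.filter (fun x => v x < 0), v x ^ 2) ≤ ∑ x : V, v x ^ 2 := by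
    have h := Finset.sum_union (f := fun x => v x ^ 2) hdisjPQ
    rw [← h]
    exact Finset.sum_le_sum_of_subset_of_nonneg (Finset.subset_univ _)
      (fun x _ _ => sq_nonneg (v x))
  have hcardPQ : (Finset.univ.filter (fun x => 0 < v x)).card
      + (Finset.univ.filter (fun x => v x < 0)).card ≤ Fintype.card V := by
    rw [← Finset.card_union_of_disjoint hdisjPQ]
    exact (Finset.card_le_univ _).trans_eq Finset.card_univ
  have hp2 : (∑ x ∈ Finset.univ.filter (fun x => 0 < v x), v x) ^ 2
      ≤ ((Finset.univ.filter (fun x => 0 < v x)).card : ℝ)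
        * ∑ x ∈ Finset.univ.filter (fun x => 0 < v x), v x ^ 2 :=
    sq_sum_le_card_mul_sum_sq
  have hq2 : (-(∑ x ∈ Finset.univ.filter (fun x => v x < 0), v x)) ^ 2
      ≤ ((Finset.univ.filter (fun x => v x < 0)).card : ℝ)
        * ∑ x ∈ Finset.univ.filter (fun x => v x < 0), v x ^ 2 := by
    have h := sq_sum_le_card_mul_sum_sq
      (s := Finset.univ.filter (fun x => v x < 0)) (f := v)
    calc (-(∑ x ∈ Finset.univ.filter (fun x => v x < 0), v x)) ^ 2
        = (∑ x ∈ Finset.univ.filter (fun x => v x < 0), v x) ^ 2 := by ring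
      _ ≤ _ := h
  -- main inequality
  have hmain : m * ((∑ x ∈ Finset.univ.filter (fun x => 0 < v x), v x) ^ 2
        + (-(∑ x ∈ Finset.univ.filter (fun x => v x < 0), v x)) ^ 2)
      - 2 * M * (∑ x ∈ Finset.univ.filter (fun x => 0 < v x), v x)
        * (-(∑ x ∈ Finset.univ.filter (fun x => v x < 0), v x))
      - m * (∑ x : V, v x ^ 2) ≤ μ * ∑ x : V, v x ^ 2 := by
    rw [hS] at hdecomp
    rw [hS, hW] at hE
    linarith [hquad, hdecomp, hE]
  -- key bound parameterized by K
  have hpk : (∑ x ∈ Finset.univ.filter (fun x => 0 < v x), v x) ≠ 0 →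
      1 ≤ (Finset.univ.filter (fun x => 0 < v x)).card := by
    intro h
    refine Finset.card_pos.2 ?_
    rw [Finset.nonempty_iff_ne_empty]
    intro he
    exact h (by rw [he, Finset.sum_empty])
  have hqk : (-(∑ x ∈ Finset.univ.filter (fun x => v x < 0), v x)) ≠ 0 →
      1 ≤ (Finset.univ.filter (fun x => v x < 0)).card := by
    intro h
    refine Finset.card_pos.2 ?_
    rw [Finset.nonempty_iff_ne_empty]
    intro he
    exact h (by rw [he, Finset.sum_empty]; ring)
  have hNq0 : 0 ≤ ∑ x ∈ Finset.univ.filter (fun x => v x < 0), v x ^ 2 :=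
    Finset.sum_nonneg fun x _ => sq_nonneg _
  have keyK : ∀ Kr : ℝ, 0 ≤ Kr →
      (∀ k : ℕ, 1 ≤ k → k < Fintype.card V →
        (k : ℝ) * ((Fintype.card V : ℝ) - k) ≤ Kr) →
      ((Fintype.card V : ℝ) * m
        - Real.sqrt (m ^ 2 * (Fintype.card V : ℝ) ^ 2 + 4 * Kr * (M ^ 2 - m ^ 2))) / 2 - m
        ≤ μ := fun Kr hK0 hKk =>
    keyK_aux (Fintype.card V) (Finset.univ.filter (fun x => 0 < v x)).card
      (Finset.univ.filter (fun x => v x < 0)).card μ m M (∑ x : V, v x ^ 2)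
      (∑ x ∈ Finset.univ.filter (fun x => 0 < v x), v x)
      (-(∑ x ∈ Finset.univ.filter (fun x => v x < 0), v x))
      (∑ x ∈ Finset.univ.filter (fun x => 0 < v x), v x ^ 2)
      (∑ x ∈ Finset.univ.filter (fun x => v x < 0), v x ^ 2) Kr
      hm0 hmM hN hp0 hq0 hNq0 hNpq hp2 hq2 hpk hqk hcardPQ hmain hK0 hKk
  constructor
  · intro _
    have hK := keyK ((Fintype.card V : ℝ) ^ 2 / 4) (by positivity) ?_
    · rw [show m ^ 2 * (Fintype.card V : ℝ) ^ 2
          + 4 * ((Fintype.card V : ℝ) ^ 2 / 4) * (M ^ 2 - m ^ 2)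
          = ((Fintype.card V : ℝ) * M) ^ 2 from by ring,
        Real.sqrt_sq (by positivity)] at hK
      have heq : (Fintype.card V : ℝ) * (m - M) / 2 - m
          = ((Fintype.card V : ℝ) * m - (Fintype.card V : ℝ) * M) / 2 - m := by ring
      rw [heq]
      exact hK
    · intro k _ _
      nlinarith [sq_nonneg ((Fintype.card V : ℝ) - 2 * k)]
  · intro hOdd
    have hn2 : (2 : ℝ) ≤ (Fintype.card V : ℝ) := by exact_mod_cast hcard
    have hK := keyK (((Fintype.card V : ℝ) ^ 2 - 1) / 4) (by nlinarith) ?_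
    · rw [show m ^ 2 * (Fintype.card V : ℝ) ^ 2
          + 4 * (((Fintype.card V : ℝ) ^ 2 - 1) / 4) * (M ^ 2 - m ^ 2)
          = m ^ 2 + ((Fintype.card V : ℝ) ^ 2 - 1) * M ^ 2 from by ring] at hK
      exact hK
    · intro k hk1 hkn
      obtain ⟨t, ht⟩ := hOdd
      have hz : ((Fintype.card V : ℤ) - 2 * (k : ℤ)) ≠ 0 := by omega
      have h1 : (1 : ℤ) ≤ ((Fintype.card V : ℤ) - 2 * (k : ℤ)) ^ 2 := by
        rcases hz.lt_or_gt with h | h <;> nlinarith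
      have h1' : (1 : ℝ) ≤ ((Fintype.card V : ℝ) - 2 * (k : ℝ)) ^ 2 := by
        exact_mod_cast h1
      nlinarith [h1']
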